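/- Let T > 0, let D ⊂ ℝ² be open and bounded, let ε₀ > 0, and let F₁, F₂ : ℝ × D → ℝ² and F̃ : ℝ × D × (−ε₀, ε₀) → ℝ² be C² functions that are T-periodic in the first variable. For z ∈ D and ε ∈ (−ε₀, ε₀), let x(t, z, ε) denote the solution of the initial value problem x' = ε F₁(t, x) + ε² F₂(t, x) + ε³ F̃(t, x, ε), x(0) = z. Define f₁(z) = ∫₀^T F₁(t, z) dt and f₂(z) = ∫₀^T [ F₂(t, z) + D_x F₁(t, z) · ∫₀^t F₁(s, z) ds ] dt. Then for every compact set K ⊂ D there exist constants C > 0 and ε₁ ∈ (0, ε₀) such that for all z ∈ K and all |ε| < ε₁, the solution x(·, z, ε) is defined on [0, T] and ‖x(T, z, ε) − z − ε f₁(z) − ε² f₂(z)‖ ≤ C |ε|³. -/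

import Mathlib

open Set Metric ContinuousLinearMap
open scoped Interval

private structure OldPL {E : Type*} [NormedAddCommGroup E] (v : ℝ → E → E)
    (tMin t₀ tMax : ℝ) (x₀ : E) (L : NNReal) (R C : ℝ) : Prop where
  ht₀ : t₀ ∈ Icc tMin tMax
  hR : 0 ≤ R
  lipschitz : ∀ t ∈ Icc tMin tMax, LipschitzOnWith L (v t) (closedBall x₀ R)
  cont : ∀ x ∈ closedBall x₀ R, ContinuousOn (fun t => v t x) (Icc tMin tMax)
  norm_le : ∀ t ∈ Icc tMin tMax, ∀ x ∈ closedBall x₀ R, ‖v t x‖ ≤ C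
  C_mul_le_R : C * max (tMax - t₀) (t₀ - tMin) ≤ R

private theorem pl_exists_mem {E : Type*} [NormedAddCommGroup E] [NormedSpace ℝ E]
    [CompleteSpace E]
    {v : ℝ → E → E} {tMin t₀ tMax : ℝ} (x₀ : E) {C R : ℝ} {L : NNReal}
    (hpl : OldPL v tMin t₀ tMax x₀ L R C) :
    ∃ f : ℝ → E, f t₀ = x₀ ∧ (∀ t ∈ Icc tMin tMax, f t ∈ closedBall x₀ R) ∧
      ∀ t ∈ Icc tMin tMax, HasDerivWithinAt f (v t (f t)) (Icc tMin tMax) t := by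
  lift C to NNReal using
    (norm_nonneg _).trans (hpl.norm_le t₀ hpl.ht₀ x₀ (mem_closedBall_self hpl.hR))
  lift R to NNReal using hpl.hR
  lift t₀ to Icc tMin tMax using hpl.ht₀
  have hf : IsPicardLindelof v t₀ x₀ R 0 C L :=
    ⟨hpl.lipschitz, hpl.cont, hpl.norm_le, by simpa using hpl.C_mul_le_R⟩
  have hx : x₀ ∈ closedBall x₀ ((0 : NNReal) : ℝ) := by simp
  obtain ⟨α, hα⟩ := ODE.FunSpace.exists_isFixedPt_next hf hx
  have key : ∀ y ∈ Icc tMin tMax, α.compProj y = ODE.picard v t₀ x₀ α.compProj y := by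
    intro y hy
    have h2 := congrArg (fun β => ODE.FunSpace.compProj β y) hα.eq
    simp only [ODE.FunSpace.compProj_apply, ODE.FunSpace.next_apply, projIcc_of_mem _ hy] at h2
    rw [ODE.FunSpace.compProj_apply, projIcc_of_mem _ hy]
    exact h2.symm
  refine ⟨α.compProj, ?_, fun t ht => ODE.FunSpace.compProj_mem_closedBall _ hf.mul_max_le,
    fun t ht => ?_⟩
  · rw [key _ t₀.2]; simp
  · have hpic := ODE.hasDerivWithinAt_picard_Icc t₀.2 hf.continuousOn_uncurry
      α.continuous_compProj.continuousOn
      (fun t _ => ODE.FunSpace.compProj_mem_closedBall α hf.mul_max_le) x₀ ht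
    exact hpic.congr key (key t ht)

private theorem opNorm_comp_le_of_le {E F G : Type*} [NormedAddCommGroup E] [NormedSpace ℝ E]
    [NormedAddCommGroup F] [NormedSpace ℝ F] [NormedAddCommGroup G] [NormedSpace ℝ G]
    (U : F →L[ℝ] G) (J : E →L[ℝ] F) (hJ : ∀ u, ‖J u‖ ≤ ‖u‖) : ‖U.comp J‖ ≤ ‖U‖ :=
  ContinuousLinearMap.opNorm_le_bound _ (norm_nonneg U) fun u => by
    calc ‖U (J u)‖ ≤ ‖U‖ * ‖J u‖ := U.le_opNorm _
    _ ≤ ‖U‖ * ‖u‖ := mul_le_mul_of_nonneg_left (hJ u) (norm_nonneg U)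

private theorem mvt_partial {E' F : Type*} [NormedAddCommGroup E'] [NormedSpace ℝ E']
    [NormedAddCommGroup F] [NormedSpace ℝ F]
    {G : E' → F} {U : Set E'} (hG : ∀ p ∈ U, DifferentiableAt ℝ G p)
    {ι : (ℝ×ℝ) → E'} {J : (ℝ×ℝ) →L[ℝ] E'} (hι : ∀ y, HasFDerivAt ι J y)
    (hJ : ∀ u, ‖J u‖ ≤ ‖u‖)
    {Q : Set (ℝ×ℝ)} (hQ : Convex ℝ Q) (hsub : ∀ y ∈ Q, ι y ∈ U)
    {B : ℝ} (hB : ∀ y ∈ Q, ‖fderiv ℝ G (ι y)‖ ≤ B)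
    {a b : ℝ×ℝ} (ha : a ∈ Q) (hb : b ∈ Q) : ‖G (ι a) - G (ι b)‖ ≤ B * ‖a - b‖ := by
  have h1 : ∀ y ∈ Q, HasFDerivWithinAt (fun y' => G (ι y')) ((fderiv ℝ G (ι y)).comp J) Q y :=
    fun y hy => ((hG _ (hsub y hy)).hasFDerivAt.comp y (hι y)).hasFDerivWithinAt
  have h2 : ∀ y ∈ Q, ‖(fderiv ℝ G (ι y)).comp J‖ ≤ B := fun y hy =>
    le_trans (opNorm_comp_le_of_le _ _ hJ) (hB y hy)
  exact hQ.norm_image_sub_le_of_norm_hasFDerivWithin_le h1 h2 hb ha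

private theorem inr_norm_le (u : ℝ × ℝ) : ‖(inr ℝ ℝ (ℝ×ℝ)) u‖ ≤ ‖u‖ := by
  simp [ContinuousLinearMap.inr_apply, Prod.norm_def, norm_nonneg]

private theorem inrl_norm_le (u : ℝ × ℝ) :
    ‖((inr ℝ ℝ ((ℝ×ℝ)×ℝ)).comp (inl ℝ (ℝ×ℝ) ℝ)) u‖ ≤ ‖u‖ := by
  simp [ContinuousLinearMap.inr_apply, ContinuousLinearMap.inl_apply, Prod.norm_def,
    norm_nonneg]

set_option maxHeartbeats 2000000 in
theorem stmt_9 (T : ℝ) (hT : 0 < T)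
    (D : Set (ℝ × ℝ)) (hDopen : IsOpen D) (hDbdd : Bornology.IsBounded D)
    (ε₀ : ℝ) (hε₀ : 0 < ε₀)
    (F₁ F₂ : ℝ × (ℝ × ℝ) → ℝ × ℝ)
    (Ft : ℝ × (ℝ × ℝ) × ℝ → ℝ × ℝ)
    (hF₁ : ContDiffOn ℝ 2 F₁ (Set.univ ×ˢ D))
    (hF₂ : ContDiffOn ℝ 2 F₂ (Set.univ ×ˢ D))
    (hFt : ContDiffOn ℝ 2 Ft (Set.univ ×ˢ D ×ˢ Set.Ioo (-ε₀) ε₀))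
    (hper₁ : ∀ t x, F₁ (t + T, x) = F₁ (t, x))
    (hper₂ : ∀ t x, F₂ (t + T, x) = F₂ (t, x))
    (hpert : ∀ t x ε, Ft (t + T, x, ε) = Ft (t, x, ε))
    (f₁ f₂ : ℝ × ℝ → ℝ × ℝ)
    (hf₁ : ∀ z, f₁ z = ∫ t in (0:ℝ)..T, F₁ (t, z))
    (hf₂ : ∀ z, f₂ z = ∫ t in (0:ℝ)..T,
      (F₂ (t, z) + fderiv ℝ (fun y => F₁ (t, y)) z (∫ s in (0:ℝ)..t, F₁ (s, z))))
    (K : Set (ℝ × ℝ)) (hK : IsCompact K) (hKD : K ⊆ D) :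
    ∃ C : ℝ, 0 < C ∧ ∃ ε₁ ∈ Set.Ioo (0:ℝ) ε₀, ∀ z ∈ K, ∀ ε : ℝ, |ε| < ε₁ →
      ∃ x : ℝ → ℝ × ℝ, x 0 = z ∧
        (∀ t ∈ Set.Icc (0:ℝ) T, x t ∈ D) ∧
        (∀ t ∈ Set.Icc (0:ℝ) T,
          HasDerivAt x (ε • F₁ (t, x t) + ε^2 • F₂ (t, x t) + ε^3 • Ft (t, x t, ε)) t) ∧
        ‖x T - z - ε • f₁ z - ε^2 • f₂ z‖ ≤ C * |ε|^3 := by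
  classical
  -- thickened compact set
  obtain ⟨δ, hδ, hδK⟩ := hK.exists_cthickening_subset_open hDopen hKD
  set K' : Set (ℝ×ℝ) := cthickening δ K with hK'def
  have hK'c : IsCompact K' := hK.cthickening
  have hK'D : K' ⊆ D := hδK
  have hballK' : ∀ z ∈ K, closedBall z δ ⊆ K' :=
    fun z hz => closedBall_subset_cthickening hz δ
  set I' : Set ℝ := Icc (-1 : ℝ) (T+1) with hI'def
  have hsubI : Icc (0:ℝ) T ⊆ I' := Icc_subset_Icc (by norm_num) (by linarith)
  set U : Set (ℝ × (ℝ×ℝ)) := univ ×ˢ D with hUdef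
  have hUopen : IsOpen U := isOpen_univ.prod hDopen
  set U' : Set (ℝ × (ℝ×ℝ) × ℝ) := univ ×ˢ D ×ˢ Ioo (-ε₀) ε₀ with hU'def
  have hU'open : IsOpen U' := isOpen_univ.prod (hDopen.prod isOpen_Ioo)
  set S : Set (ℝ × (ℝ×ℝ)) := I' ×ˢ K' with hSdef
  have hSc : IsCompact S := isCompact_Icc.prod hK'c
  have hSU : S ⊆ U := prod_mono (subset_univ _) hK'D
  set S' : Set (ℝ × (ℝ×ℝ) × ℝ) := I' ×ˢ K' ×ˢ Icc (-(ε₀/2)) (ε₀/2) with hS'def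
  have hS'c : IsCompact S' := isCompact_Icc.prod (hK'c.prod isCompact_Icc)
  have hS'U' : S' ⊆ U' := by
    refine prod_mono (subset_univ _) (prod_mono hK'D fun e he => ?_)
    exact ⟨by linarith [he.1], by linarith [he.2]⟩
  -- differentiability facts
  have hF₁d : DifferentiableOn ℝ F₁ U := hF₁.differentiableOn two_ne_zero
  have hF₂d : DifferentiableOn ℝ F₂ U := hF₂.differentiableOn two_ne_zero
  have hFtd : DifferentiableOn ℝ Ft U' := hFt.differentiableOn two_ne_zero
  have hG₁ : ContDiffOn ℝ 1 (fderiv ℝ F₁) U :=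
    hF₁.fderiv_of_isOpen hUopen (by norm_num)
  have hG₁c : ContinuousOn (fderiv ℝ F₁) U :=
    hF₁.continuousOn_fderiv_of_isOpen hUopen one_le_two
  have hG₂c : ContinuousOn (fderiv ℝ F₂) U :=
    hF₂.continuousOn_fderiv_of_isOpen hUopen one_le_two
  have hGtc : ContinuousOn (fderiv ℝ Ft) U' :=
    hFt.continuousOn_fderiv_of_isOpen hU'open one_le_two
  have hG₁d : DifferentiableOn ℝ (fderiv ℝ F₁) U := hG₁.differentiableOn one_ne_zero
  have hH₁c : ContinuousOn (fderiv ℝ (fderiv ℝ F₁)) U :=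
    hG₁.continuousOn_fderiv_of_isOpen hUopen le_rfl
  -- bounds on compact sets
  obtain ⟨M₁, hM₁⟩ := hSc.exists_bound_of_continuousOn (hF₁.continuousOn.mono hSU)
  obtain ⟨M₂, hM₂⟩ := hSc.exists_bound_of_continuousOn (hF₂.continuousOn.mono hSU)
  obtain ⟨M₃, hM₃⟩ := hS'c.exists_bound_of_continuousOn (hFt.continuousOn.mono hS'U')
  obtain ⟨B₁, hB₁⟩ := hSc.exists_bound_of_continuousOn (hG₁c.mono hSU)
  obtain ⟨B₂, hB₂⟩ := hSc.exists_bound_of_continuousOn (hG₂c.mono hSU)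
  obtain ⟨B₃, hB₃⟩ := hS'c.exists_bound_of_continuousOn (hGtc.mono hS'U')
  obtain ⟨B₄, hB₄⟩ := hSc.exists_bound_of_continuousOn (f := fderiv ℝ (fderiv ℝ F₁)) (hH₁c.mono hSU)
  set M : ℝ := max (max M₁ (max M₂ M₃)) 0 + 1 with hMdef
  have hM1 : (1:ℝ) ≤ M := by
    have := le_max_right (max M₁ (max M₂ M₃)) (0:ℝ); simp only [hMdef]; linarith
  have hM0 : (0:ℝ) < M := by linarith
  have hMF₁ : ∀ p ∈ S, ‖F₁ p‖ ≤ M := fun p hp => by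
    have h := hM₁ p hp
    have : M₁ ≤ M := by
      have h1 := le_max_left M₁ (max M₂ M₃)
      have h2 := le_max_left (max M₁ (max M₂ M₃)) (0:ℝ); simp only [hMdef]; linarith
    linarith
  have hMF₂ : ∀ p ∈ S, ‖F₂ p‖ ≤ M := fun p hp => by
    have h := hM₂ p hp
    have : M₂ ≤ M := by
      have h1 := le_max_left M₂ M₃
      have h1' := le_max_right M₁ (max M₂ M₃)
      have h2 := le_max_left (max M₁ (max M₂ M₃)) (0:ℝ); simp only [hMdef]; linarith
    linarith
  have hMFt : ∀ p ∈ S', ‖Ft p‖ ≤ M := fun p hp => by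
    have h := hM₃ p hp
    have : M₃ ≤ M := by
      have h1 := le_max_right M₂ M₃
      have h1' := le_max_right M₁ (max M₂ M₃)
      have h2 := le_max_left (max M₁ (max M₂ M₃)) (0:ℝ); simp only [hMdef]; linarith
    linarith
  set B : ℝ := max (max (max B₁ B₂) (max B₃ B₄)) 0 + 1 with hBdef
  have hB0 : (0:ℝ) < B := by
    have := le_max_right (max (max B₁ B₂) (max B₃ B₄)) (0:ℝ)
    simp only [hBdef]; linarith
  have hBF₁ : ∀ p ∈ S, ‖fderiv ℝ F₁ p‖ ≤ B := fun p hp => by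
    have h := hB₁ p hp
    have h1 := le_max_left B₁ B₂
    have h2 := le_max_left (max B₁ B₂) (max B₃ B₄)
    have h3 := le_max_left (max (max B₁ B₂) (max B₃ B₄)) (0:ℝ)
    simp only [hBdef]; linarith
  have hBF₂ : ∀ p ∈ S, ‖fderiv ℝ F₂ p‖ ≤ B := fun p hp => by
    have h := hB₂ p hp
    have h1 := le_max_right B₁ B₂
    have h2 := le_max_left (max B₁ B₂) (max B₃ B₄)
    have h3 := le_max_left (max (max B₁ B₂) (max B₃ B₄)) (0:ℝ)
    simp only [hBdef]; linarith
  have hBFt : ∀ p ∈ S', ‖fderiv ℝ Ft p‖ ≤ B := fun p hp => by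
    have h := hB₃ p hp
    have h1 := le_max_left B₃ B₄
    have h2 := le_max_right (max B₁ B₂) (max B₃ B₄)
    have h3 := le_max_left (max (max B₁ B₂) (max B₃ B₄)) (0:ℝ)
    simp only [hBdef]; linarith
  have hBH₁ : ∀ p ∈ S, ‖fderiv ℝ (fderiv ℝ F₁) p‖ ≤ B := fun p hp => by
    have h := hB₄ p hp
    have h1 := le_max_right B₃ B₄
    have h2 := le_max_right (max B₁ B₂) (max B₃ B₄)
    have h3 := le_max_left (max (max B₁ B₂) (max B₃ B₄)) (0:ℝ)
    simp only [hBdef]; linarith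
  -- constants
  set P : ℝ := 3*M*(T+1) with hPdef
  have hP0 : 0 < P := by positivity
  set Q : ℝ := (B*P + 2*M)*T with hQdef
  have hQ0 : 0 < Q := by positivity
  set Cc : ℝ := (B*P^2 + B*Q + B*P + M)*T with hCcdef
  have hCc : 0 < Cc := by positivity
  set ε₁ : ℝ := min (min (ε₀/2) 1) (δ / (3*M*(T+1))) with hε₁def
  have hε₁pos : 0 < ε₁ := by
    have h1 : (0:ℝ) < ε₀/2 := by linarith
    have h2 : (0:ℝ) < δ / (3*M*(T+1)) := by positivity
    exact lt_min (lt_min h1 one_pos) h2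
  have hε₁lt : ε₁ < ε₀ := by
    have h1 : ε₁ ≤ ε₀/2 := le_trans (min_le_left _ _) (min_le_left _ _)
    linarith
  refine ⟨Cc, hCc, ε₁, ⟨hε₁pos, hε₁lt⟩, fun z hz ε hε => ?_⟩
  have hzD : z ∈ D := hKD hz
  have hball : closedBall z δ ⊆ K' := hballK' z hz
  have hε1 : |ε| ≤ 1 := by
    have h2 : ε₁ ≤ 1 := le_trans (min_le_left _ _) (min_le_right _ _)
    linarith
  have hεabs0 : (0:ℝ) ≤ |ε| := abs_nonneg ε
  have hεhalf : |ε| ≤ ε₀/2 := by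
    have h2 : ε₁ ≤ ε₀/2 := le_trans (min_le_left _ _) (min_le_left _ _)
    linarith
  have hεIoo : ε ∈ Ioo (-ε₀) ε₀ := by
    have h := abs_lt.mp (lt_of_lt_of_le hε hε₁lt.le)
    exact ⟨h.1, h.2⟩
  have hεIcc : ε ∈ Icc (-(ε₀/2)) (ε₀/2) := by
    rcases abs_le.mp hεhalf with ⟨h1, h2⟩; exact ⟨h1, h2⟩
  have hεδ : 3 * M * |ε| * (T+1) ≤ δ := by
    have h2 : ε₁ ≤ δ / (3*M*(T+1)) := min_le_right _ _
    have h3 : |ε| ≤ δ / (3*M*(T+1)) := by linarith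
    have h4 : (0:ℝ) < 3*M*(T+1) := by positivity
    calc 3 * M * |ε| * (T+1) = |ε| * (3 * M * (T+1)) := by ring
    _ ≤ (δ / (3*M*(T+1))) * (3 * M * (T+1)) := by
        exact mul_le_mul_of_nonneg_right h3 h4.le
    _ = δ := by field_simp
  set v : ℝ → (ℝ×ℝ) → (ℝ×ℝ) :=
    fun s y => ε • F₁ (s, y) + ε^2 • F₂ (s, y) + ε^3 • Ft (s, y, ε) with hvdef
  -- membership helpers
  have hmemS : ∀ s ∈ I', ∀ y ∈ closedBall z δ, (s, y) ∈ S :=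
    fun s hs y hy => ⟨hs, hball hy⟩
  have hmemS' : ∀ s ∈ I', ∀ y ∈ closedBall z δ, (s, y, ε) ∈ S' :=
    fun s hs y hy => ⟨hs, hball hy, hεIcc⟩
  have hyD : ∀ y ∈ closedBall z δ, y ∈ D := fun y hy => hK'D (hball hy)
  -- norm bound on v
  have habs2 : |ε|^2 ≤ |ε| := by
    calc |ε|^2 = |ε| * |ε| := by ring
    _ ≤ 1 * |ε| := mul_le_mul_of_nonneg_right hε1 hεabs0
    _ = |ε| := one_mul _
  have habs3 : |ε|^3 ≤ |ε| := by
    calc |ε|^3 = |ε|^2 * |ε| := pow_succ _ 2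
    _ ≤ 1 * |ε| := mul_le_mul_of_nonneg_right (le_trans habs2 hε1) hεabs0
    _ = |ε| := one_mul _
  have hvbound : ∀ s ∈ I', ∀ y ∈ closedBall z δ, ‖v s y‖ ≤ 3 * M * |ε| := by
    intro s hs y hy
    have h1 : ‖F₁ (s, y)‖ ≤ M := hMF₁ _ (hmemS s hs y hy)
    have h2 : ‖F₂ (s, y)‖ ≤ M := hMF₂ _ (hmemS s hs y hy)
    have h3 : ‖Ft (s, y, ε)‖ ≤ M := hMFt _ (hmemS' s hs y hy)
    calc ‖v s y‖ ≤ ‖ε • F₁ (s, y) + ε^2 • F₂ (s, y)‖ + ‖ε^3 • Ft (s, y, ε)‖ :=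
          norm_add_le _ _
    _ ≤ ‖ε • F₁ (s, y)‖ + ‖ε^2 • F₂ (s, y)‖ + ‖ε^3 • Ft (s, y, ε)‖ := by
        have := norm_add_le (ε • F₁ (s, y)) (ε^2 • F₂ (s, y)); linarith
    _ = |ε| * ‖F₁ (s, y)‖ + |ε|^2 * ‖F₂ (s, y)‖ + |ε|^3 * ‖Ft (s, y, ε)‖ := by
        simp [norm_smul, abs_pow]
    _ ≤ 3 * M * |ε| := by
        have t1 : |ε| * ‖F₁ (s, y)‖ ≤ |ε| * M := mul_le_mul_of_nonneg_left h1 hεabs0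
        have t2 : |ε|^2 * ‖F₂ (s, y)‖ ≤ |ε|^2 * M :=
          mul_le_mul_of_nonneg_left h2 (by positivity)
        have t2' : |ε|^2 * M ≤ |ε| * M := mul_le_mul_of_nonneg_right habs2 hM0.le
        have t3 : |ε|^3 * ‖Ft (s, y, ε)‖ ≤ |ε|^3 * M :=
          mul_le_mul_of_nonneg_left h3 (by positivity)
        have t3' : |ε|^3 * M ≤ |ε| * M := mul_le_mul_of_nonneg_right habs3 hM0.le
        linarith
  -- Lipschitz bounds in the space variable
  have lipF₁ : ∀ s ∈ I', ∀ y₁ ∈ closedBall z δ, ∀ y₂ ∈ closedBall z δ,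
      ‖F₁ (s, y₁) - F₁ (s, y₂)‖ ≤ B * ‖y₁ - y₂‖ := by
    intro s hs y₁ h₁ y₂ h₂
    exact mvt_partial
      (fun p hp => hF₁d.differentiableAt (hUopen.mem_nhds hp))
      (hasFDerivAt_prodMk_right s) inr_norm_le (convex_closedBall z δ)
      (fun y hy => ⟨trivial, hyD y hy⟩)
      (fun y hy => hBF₁ _ (hmemS s hs y hy)) h₁ h₂
  have lipF₂ : ∀ s ∈ I', ∀ y₁ ∈ closedBall z δ, ∀ y₂ ∈ closedBall z δ,
      ‖F₂ (s, y₁) - F₂ (s, y₂)‖ ≤ B * ‖y₁ - y₂‖ := by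
    intro s hs y₁ h₁ y₂ h₂
    exact mvt_partial
      (fun p hp => hF₂d.differentiableAt (hUopen.mem_nhds hp))
      (hasFDerivAt_prodMk_right s) inr_norm_le (convex_closedBall z δ)
      (fun y hy => ⟨trivial, hyD y hy⟩)
      (fun y hy => hBF₂ _ (hmemS s hs y hy)) h₁ h₂
  have lipFt : ∀ s ∈ I', ∀ y₁ ∈ closedBall z δ, ∀ y₂ ∈ closedBall z δ,
      ‖Ft (s, y₁, ε) - Ft (s, y₂, ε)‖ ≤ B * ‖y₁ - y₂‖ := by
    intro s hs y₁ h₁ y₂ h₂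
    exact mvt_partial
      (fun p hp => hFtd.differentiableAt (hU'open.mem_nhds hp))
      (fun y => (hasFDerivAt_prodMk_right s (y, ε)).comp y (hasFDerivAt_prodMk_left y ε))
      inrl_norm_le (convex_closedBall z δ)
      (fun y hy => by exact ⟨trivial, hyD y hy, hεIoo⟩)
      (fun y hy => hBFt _ (hmemS' s hs y hy)) h₁ h₂
  have lipG₁ : ∀ s ∈ I', ∀ y₁ ∈ closedBall z δ, ∀ y₂ ∈ closedBall z δ,
      ‖fderiv ℝ F₁ (s, y₁) - fderiv ℝ F₁ (s, y₂)‖ ≤ B * ‖y₁ - y₂‖ := by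
    intro s hs y₁ h₁ y₂ h₂
    exact mvt_partial
      (fun p hp => hG₁d.differentiableAt (hUopen.mem_nhds hp))
      (hasFDerivAt_prodMk_right s) inr_norm_le (convex_closedBall z δ)
      (fun y hy => ⟨trivial, hyD y hy⟩)
      (fun y hy => hBH₁ _ (hmemS s hs y hy)) h₁ h₂
  have hlipv : ∀ s ∈ I', ∀ y₁ ∈ closedBall z δ, ∀ y₂ ∈ closedBall z δ,
      ‖v s y₁ - v s y₂‖ ≤ 3*B * ‖y₁ - y₂‖ := by
    intro s hs y₁ h₁ y₂ h₂
    have e1 := lipF₁ s hs y₁ h₁ y₂ h₂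
    have e2 := lipF₂ s hs y₁ h₁ y₂ h₂
    have e3 := lipFt s hs y₁ h₁ y₂ h₂
    have hn : (0:ℝ) ≤ ‖y₁ - y₂‖ := norm_nonneg _
    have heq : v s y₁ - v s y₂ = ε • (F₁ (s, y₁) - F₁ (s, y₂)) +
        ε^2 • (F₂ (s, y₁) - F₂ (s, y₂)) + ε^3 • (Ft (s, y₁, ε) - Ft (s, y₂, ε)) := by
      simp only [hvdef, smul_sub]; abel
    rw [heq]
    have t1 : ‖ε • (F₁ (s, y₁) - F₁ (s, y₂))‖ ≤ B * ‖y₁ - y₂‖ := by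
      rw [norm_smul, Real.norm_eq_abs]
      calc |ε| * ‖F₁ (s, y₁) - F₁ (s, y₂)‖ ≤ 1 * (B * ‖y₁ - y₂‖) := by
            apply mul_le_mul hε1 e1 (norm_nonneg _) zero_le_one
      _ = B * ‖y₁ - y₂‖ := one_mul _
    have t2 : ‖ε^2 • (F₂ (s, y₁) - F₂ (s, y₂))‖ ≤ B * ‖y₁ - y₂‖ := by
      rw [norm_smul, Real.norm_eq_abs, abs_pow]
      calc |ε|^2 * ‖F₂ (s, y₁) - F₂ (s, y₂)‖ ≤ 1 * (B * ‖y₁ - y₂‖) := by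
            apply mul_le_mul (by nlinarith) e2 (norm_nonneg _) zero_le_one
      _ = B * ‖y₁ - y₂‖ := one_mul _
    have t3 : ‖ε^3 • (Ft (s, y₁, ε) - Ft (s, y₂, ε))‖ ≤ B * ‖y₁ - y₂‖ := by
      rw [norm_smul, Real.norm_eq_abs, abs_pow]
      calc |ε|^3 * ‖Ft (s, y₁, ε) - Ft (s, y₂, ε)‖ ≤ 1 * (B * ‖y₁ - y₂‖) := by
            apply mul_le_mul (by nlinarith) e3 (norm_nonneg _) zero_le_one
      _ = B * ‖y₁ - y₂‖ := one_mul _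
    calc ‖ε • (F₁ (s, y₁) - F₁ (s, y₂)) + ε^2 • (F₂ (s, y₁) - F₂ (s, y₂)) +
          ε^3 • (Ft (s, y₁, ε) - Ft (s, y₂, ε))‖
        ≤ ‖ε • (F₁ (s, y₁) - F₁ (s, y₂)) + ε^2 • (F₂ (s, y₁) - F₂ (s, y₂))‖ +
          ‖ε^3 • (Ft (s, y₁, ε) - Ft (s, y₂, ε))‖ := norm_add_le _ _
    _ ≤ ‖ε • (F₁ (s, y₁) - F₁ (s, y₂))‖ + ‖ε^2 • (F₂ (s, y₁) - F₂ (s, y₂))‖ +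
          ‖ε^3 • (Ft (s, y₁, ε) - Ft (s, y₂, ε))‖ := by
        have := norm_add_le (ε • (F₁ (s, y₁) - F₁ (s, y₂)))
          (ε^2 • (F₂ (s, y₁) - F₂ (s, y₂))); linarith
    _ ≤ 3*B * ‖y₁ - y₂‖ := by linarith
  -- Picard–Lindelöf
  have hpl : OldPL v (-1) 0 (T+1) z ⟨3*B, by positivity⟩ δ (3 * M * |ε|) := by
    refine ⟨⟨by norm_num, by linarith⟩, hδ.le, ?_, ?_, ?_, ?_⟩
    · intro t ht
      refine LipschitzOnWith.of_dist_le_mul fun y₁ h₁ y₂ h₂ => ?_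
      rw [dist_eq_norm, dist_eq_norm]
      exact hlipv t ht y₁ h₁ y₂ h₂
    · intro y hy
      have c1 : ContinuousOn (fun t : ℝ => F₁ (t, y)) I' :=
        hF₁.continuousOn.comp ((continuous_id.prodMk continuous_const).continuousOn)
          (fun t _ => ⟨trivial, hyD y hy⟩)
      have c2 : ContinuousOn (fun t : ℝ => F₂ (t, y)) I' :=
        hF₂.continuousOn.comp ((continuous_id.prodMk continuous_const).continuousOn)
          (fun t _ => ⟨trivial, hyD y hy⟩)
      have c3 : ContinuousOn (fun t : ℝ => Ft (t, y, ε)) I' :=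
        hFt.continuousOn.comp
          ((continuous_id.prodMk continuous_const).continuousOn)
          (fun t _ => ⟨trivial, hyD y hy, hεIoo⟩)
      exact ((c1.const_smul ε).add (c2.const_smul (ε^2))).add
        (c3.const_smul (ε^3))
    · exact fun t ht y hy => hvbound t ht y hy
    · have hmax : max (T+1-0) (0-(-1)) = T+1 := by
        rw [max_eq_left]; · ring_nf
        · linarith
      rw [hmax]
      linarith [hεδ]
  obtain ⟨x, hx0, hxmem, hxderiv⟩ := pl_exists_mem z hpl
  have hmem' : ∀ t ∈ Icc (0:ℝ) T, x t ∈ closedBall z δ :=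
    fun t ht => hxmem t (hsubI ht)
  have hxD : ∀ t ∈ Icc (0:ℝ) T, x t ∈ D := fun t ht => hyD _ (hmem' t ht)
  have hder : ∀ t ∈ Icc (0:ℝ) T, HasDerivAt x (v t (x t)) t := fun t ht =>
    (hxderiv t (hsubI ht)).hasDerivAt
      (Icc_mem_nhds (by linarith [ht.1]) (by linarith [ht.2]))
  refine ⟨x, hx0, hxD, fun t ht => by simpa only [hvdef] using hder t ht, ?_⟩
  -- continuity of the solution and of the vector field along it
  have hxc : ContinuousOn x (Icc (0:ℝ) T) :=
    fun s hs => (hder s hs).continuousAt.continuousWithinAt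
  have hvxc : ContinuousOn (fun s => v s (x s)) (Icc (0:ℝ) T) := by
    have hmap : ∀ s ∈ Icc (0:ℝ) T, (s, x s) ∈ U := fun s hs => ⟨trivial, hxD s hs⟩
    have hmap' : ∀ s ∈ Icc (0:ℝ) T, (s, x s, ε) ∈ U' :=
      fun s hs => ⟨trivial, hxD s hs, hεIoo⟩
    have c1 : ContinuousOn (fun s => F₁ (s, x s)) (Icc (0:ℝ) T) :=
      hF₁.continuousOn.comp (continuousOn_id.prodMk hxc) hmap
    have c2 : ContinuousOn (fun s => F₂ (s, x s)) (Icc (0:ℝ) T) :=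
      hF₂.continuousOn.comp (continuousOn_id.prodMk hxc) hmap
    have c3 : ContinuousOn (fun s => Ft (s, x s, ε)) (Icc (0:ℝ) T) :=
      hFt.continuousOn.comp (continuousOn_id.prodMk (hxc.prodMk continuousOn_const)) hmap'
    exact ((c1.const_smul ε).add (c2.const_smul (ε^2))).add
      (c3.const_smul (ε^3))
  have hintvx : ∀ t ∈ Icc (0:ℝ) T,
      IntervalIntegrable (fun s => v s (x s)) MeasureTheory.volume 0 t := by
    intro t ht
    refine (hvxc.mono ?_).intervalIntegrable
    rw [uIcc_of_le ht.1]
    exact Icc_subset_Icc_right ht.2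
  have hinteq : ∀ t ∈ Icc (0:ℝ) T, x t - z = ∫ s in (0:ℝ)..t, v s (x s) := by
    intro t ht
    rw [← hx0]
    refine (intervalIntegral.integral_eq_sub_of_hasDerivAt
      (fun s hs => hder s ?_) (hintvx t ht)).symm
    rw [uIcc_of_le ht.1] at hs
    exact Icc_subset_Icc_right ht.2 hs
  have hIsub : ∀ t ∈ Icc (0:ℝ) T, Ι (0:ℝ) t ⊆ Icc (0:ℝ) T := by
    intro t ht
    rw [uIoc_of_le ht.1]
    exact Ioc_subset_Icc_self.trans (Icc_subset_Icc_right ht.2)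
  -- zeroth order estimate
  have step1 : ∀ t ∈ Icc (0:ℝ) T, ‖x t - z‖ ≤ |ε| * P := by
    intro t ht
    rw [hinteq t ht]
    have hb := intervalIntegral.norm_integral_le_of_norm_le_const
      (C := 3 * M * |ε|) (f := fun s => v s (x s)) (a := 0) (b := t)
      (fun s hs => hvbound s (hsubI (hIsub t ht hs)) (x s) (hmem' s (hIsub t ht hs)))
    refine le_trans hb ?_
    have h1 : |t - 0| ≤ T := by rw [sub_zero, abs_of_nonneg ht.1]; exact ht.2
    calc 3 * M * |ε| * |t - 0| ≤ 3 * M * |ε| * (T+1) :=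
          mul_le_mul_of_nonneg_left (by linarith) (by positivity)
    _ = |ε| * P := by rw [hPdef]; ring
  -- the auxiliary functions w and A
  obtain ⟨w, hw⟩ : ∃ w : ℝ → ℝ × ℝ, ∀ s, w s = ∫ u in (0:ℝ)..s, F₁ (u, z) :=
    ⟨_, fun s => rfl⟩
  obtain ⟨A, hA⟩ : ∃ A : ℝ → (ℝ×ℝ) →L[ℝ] (ℝ×ℝ),
      ∀ s, A s = fderiv ℝ (fun y => F₁ (s, y)) z := ⟨_, fun s => rfl⟩
  have hc₁ : Continuous fun s : ℝ => F₁ (s, z) := by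
    rw [← continuousOn_univ]
    exact hF₁.continuousOn.comp ((continuous_id.prodMk continuous_const).continuousOn)
      (fun s _ => ⟨trivial, hzD⟩)
  have hc₂ : Continuous fun s : ℝ => F₂ (s, z) := by
    rw [← continuousOn_univ]
    exact hF₂.continuousOn.comp ((continuous_id.prodMk continuous_const).continuousOn)
      (fun s _ => ⟨trivial, hzD⟩)
  have hwcont : Continuous w := by
    have h := intervalIntegral.continuous_primitive (μ := MeasureTheory.volume)
      (f := fun u : ℝ => F₁ (u, z)) (fun a b => hc₁.intervalIntegrable a b) 0
    have hwe : w = fun s => ∫ u in (0:ℝ)..s, F₁ (u, z) := funext hw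
    rw [hwe]; exact h
  have hApartial : ∀ s : ℝ, ∀ y ∈ D, HasFDerivAt (fun y' => F₁ (s, y'))
      ((fderiv ℝ F₁ (s, y)).comp (inr ℝ ℝ (ℝ×ℝ))) y := by
    intro s y hy
    have h1 : HasFDerivAt F₁ (fderiv ℝ F₁ (s, y)) (s, y) :=
      (hF₁d.differentiableAt (hUopen.mem_nhds ⟨trivial, hy⟩)).hasFDerivAt
    exact h1.comp y (hasFDerivAt_prodMk_right s y)
  have hA_eq : ∀ s : ℝ, A s = (fderiv ℝ F₁ (s, z)).comp (inr ℝ ℝ (ℝ×ℝ)) := by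
    intro s
    rw [hA s]
    exact (hApartial s z hzD).fderiv
  have hAnorm : ∀ s ∈ I', ∀ u : ℝ × ℝ, ‖A s u‖ ≤ B * ‖u‖ := by
    intro s hs u
    have h1 : ‖A s‖ ≤ B := by
      rw [hA_eq s]
      refine le_trans (opNorm_comp_le_of_le _ _ inr_norm_le) ?_
      exact hBF₁ _ (hmemS s hs z (mem_closedBall_self hδ.le))
    calc ‖A s u‖ ≤ ‖A s‖ * ‖u‖ := (A s).le_opNorm u
    _ ≤ B * ‖u‖ := mul_le_mul_of_nonneg_right h1 (norm_nonneg u)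
  have hAcont : Continuous A := by
    have h1 : Continuous fun s : ℝ => fderiv ℝ F₁ (s, z) := by
      rw [← continuousOn_univ]
      exact hG₁c.comp ((continuous_id.prodMk continuous_const).continuousOn)
        (fun s _ => ⟨trivial, hzD⟩)
    have hAe : A = fun s => (fderiv ℝ F₁ (s, z)).comp (inr ℝ ℝ (ℝ×ℝ)) := funext hA_eq
    rw [hAe]
    exact h1.clm_comp continuous_const
  -- first order estimate
  have step2 : ∀ t ∈ Icc (0:ℝ) T, ‖x t - z - ε • w t‖ ≤ |ε|^2 * Q := by
    intro t ht
    have hiεF₁ : IntervalIntegrable (fun s => ε • F₁ (s, z)) MeasureTheory.volume 0 t :=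
      (hc₁.const_smul ε).intervalIntegrable 0 t
    have heq : x t - z - ε • w t = ∫ s in (0:ℝ)..t, (v s (x s) - ε • F₁ (s, z)) := by
      rw [intervalIntegral.integral_sub (hintvx t ht) hiεF₁, ← hinteq t ht,
        intervalIntegral.integral_smul, ← hw t]
    rw [heq]
    have hpoint : ∀ s ∈ Ι (0:ℝ) t,
        ‖v s (x s) - ε • F₁ (s, z)‖ ≤ |ε|^2 * (B * P + 2 * M) := by
      intro s hs
      have hsI : s ∈ Icc (0:ℝ) T := hIsub t ht hs
      have hsI' : s ∈ I' := hsubI hsI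
      have hxs : x s ∈ closedBall z δ := hmem' s hsI
      have hd : v s (x s) - ε • F₁ (s, z) = ε • (F₁ (s, x s) - F₁ (s, z)) +
          ε^2 • F₂ (s, x s) + ε^3 • Ft (s, x s, ε) := by
        simp only [hvdef, smul_sub]; abel
      rw [hd]
      have e1 : ‖F₁ (s, x s) - F₁ (s, z)‖ ≤ B * (|ε| * P) :=
        le_trans (lipF₁ s hsI' (x s) hxs z (mem_closedBall_self hδ.le))
          (mul_le_mul_of_nonneg_left
            (by simpa using step1 s hsI) hB0.le)
      have e2 : ‖F₂ (s, x s)‖ ≤ M := hMF₂ _ (hmemS s hsI' (x s) hxs)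
      have e3 : ‖Ft (s, x s, ε)‖ ≤ M := hMFt _ (hmemS' s hsI' (x s) hxs)
      calc ‖ε • (F₁ (s, x s) - F₁ (s, z)) + ε^2 • F₂ (s, x s) + ε^3 • Ft (s, x s, ε)‖
          ≤ ‖ε • (F₁ (s, x s) - F₁ (s, z)) + ε^2 • F₂ (s, x s)‖ +
            ‖ε^3 • Ft (s, x s, ε)‖ := norm_add_le _ _
      _ ≤ ‖ε • (F₁ (s, x s) - F₁ (s, z))‖ + ‖ε^2 • F₂ (s, x s)‖ +
            ‖ε^3 • Ft (s, x s, ε)‖ := by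
          have := norm_add_le (ε • (F₁ (s, x s) - F₁ (s, z))) (ε^2 • F₂ (s, x s)); linarith
      _ = |ε| * ‖F₁ (s, x s) - F₁ (s, z)‖ + |ε|^2 * ‖F₂ (s, x s)‖ +
            |ε|^3 * ‖Ft (s, x s, ε)‖ := by simp [norm_smul, abs_pow]
      _ ≤ |ε|^2 * (B * P + 2 * M) := by
          have t1 : |ε| * ‖F₁ (s, x s) - F₁ (s, z)‖ ≤ |ε| * (B * (|ε| * P)) :=
            mul_le_mul_of_nonneg_left e1 hεabs0
          have t1' : |ε| * (B * (|ε| * P)) = |ε|^2 * (B * P) := by ring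
          have t2 : |ε|^2 * ‖F₂ (s, x s)‖ ≤ |ε|^2 * M :=
            mul_le_mul_of_nonneg_left e2 (by positivity)
          have t3 : |ε|^3 * ‖Ft (s, x s, ε)‖ ≤ |ε|^3 * M :=
            mul_le_mul_of_nonneg_left e3 (by positivity)
          have t3' : |ε|^3 * M ≤ |ε|^2 * M := by
            have h5 : |ε|^3 ≤ |ε|^2 := by nlinarith
            exact mul_le_mul_of_nonneg_right h5 hM0.le
          linarith
    refine le_trans (intervalIntegral.norm_integral_le_of_norm_le_const hpoint) ?_
    have h1 : |t - 0| ≤ T := by rw [sub_zero, abs_of_nonneg ht.1]; exact ht.2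
    calc |ε|^2 * (B * P + 2 * M) * |t - 0| ≤ |ε|^2 * (B * P + 2 * M) * T :=
          mul_le_mul_of_nonneg_left h1 (by positivity)
    _ = |ε|^2 * Q := by rw [hQdef]; ring
  -- Taylor estimate for F₁ in the space variable
  have taylor : ∀ s ∈ I', ∀ x' ∈ closedBall z δ,
      ‖F₁ (s, x') - F₁ (s, z) - A s (x' - z)‖ ≤ B * ‖x' - z‖ * ‖x' - z‖ := by
    intro s hs x' hx'
    have hr0 : (0:ℝ) ≤ ‖x' - z‖ := norm_nonneg _
    have hrδ : ‖x' - z‖ ≤ δ := by rwa [← mem_closedBall_iff_norm]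
    have hsub2 : closedBall z ‖x' - z‖ ⊆ closedBall z δ := closedBall_subset_closedBall hrδ
    have hφ : ∀ y ∈ closedBall z ‖x' - z‖,
        HasFDerivWithinAt (fun y' => F₁ (s, y') - A s y')
          ((fderiv ℝ F₁ (s, y)).comp (inr ℝ ℝ (ℝ×ℝ)) - A s) (closedBall z ‖x' - z‖) y :=
      fun y hy =>
        ((hApartial s y (hyD y (hsub2 hy))).sub ((A s).hasFDerivAt)).hasFDerivWithinAt
    have hbd : ∀ y ∈ closedBall z ‖x' - z‖,
        ‖(fderiv ℝ F₁ (s, y)).comp (inr ℝ ℝ (ℝ×ℝ)) - A s‖ ≤ B * ‖x' - z‖ := by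
      intro y hy
      rw [hA_eq s, ← ContinuousLinearMap.sub_comp]
      refine le_trans (opNorm_comp_le_of_le _ _ inr_norm_le) ?_
      refine le_trans (lipG₁ s hs y (hsub2 hy) z (mem_closedBall_self hδ.le)) ?_
      have h6 : ‖y - z‖ ≤ ‖x' - z‖ := by rwa [← mem_closedBall_iff_norm]
      exact mul_le_mul_of_nonneg_left h6 hB0.le
    have hmvt := (convex_closedBall z ‖x' - z‖).norm_image_sub_le_of_norm_hasFDerivWithin_le
      hφ hbd (mem_closedBall_self hr0) (mem_closedBall_iff_norm.mpr le_rfl)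
    have heq : F₁ (s, x') - F₁ (s, z) - A s (x' - z) =
        (F₁ (s, x') - A s x') - (F₁ (s, z) - A s z) := by
      rw [map_sub]; abel
    rw [heq]
    exact hmvt
  -- final assembly
  have hTmem : T ∈ Icc (0:ℝ) T := ⟨hT.le, le_rfl⟩
  have hi1 : IntervalIntegrable (fun s => v s (x s)) MeasureTheory.volume 0 T :=
    hintvx T hTmem
  have hi2 : IntervalIntegrable (fun s => ε • F₁ (s, z)) MeasureTheory.volume 0 T :=
    (hc₁.const_smul ε).intervalIntegrable 0 T
  have hcAw : Continuous fun s => A s (w s) := hAcont.clm_apply hwcont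
  have hi3 : IntervalIntegrable (fun s => ε^2 • (F₂ (s, z) + A s (w s)))
      MeasureTheory.volume 0 T :=
    ((hc₂.add hcAw).const_smul (ε^2)).intervalIntegrable 0 T
  have hf₁' : (∫ s in (0:ℝ)..T, ε • F₁ (s, z)) = ε • f₁ z := by
    rw [intervalIntegral.integral_smul, ← hf₁ z]
  have hf₂' : (∫ s in (0:ℝ)..T, ε^2 • (F₂ (s, z) + A s (w s))) = ε^2 • f₂ z := by
    rw [intervalIntegral.integral_smul]
    congr 1
    rw [hf₂ z]
    simp only [hA, hw]
  have hsplit : x T - z - ε • f₁ z - ε^2 • f₂ z =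
      ∫ s in (0:ℝ)..T, (v s (x s) - ε • F₁ (s, z) - ε^2 • (F₂ (s, z) + A s (w s))) := by
    rw [intervalIntegral.integral_sub (hi1.sub hi2) hi3,
      intervalIntegral.integral_sub hi1 hi2, ← hinteq T hTmem, hf₁', hf₂']
  rw [hsplit]
  have hpoint : ∀ s ∈ Ι (0:ℝ) T,
      ‖v s (x s) - ε • F₁ (s, z) - ε^2 • (F₂ (s, z) + A s (w s))‖ ≤
        (B * P^2 + B * Q + B * P + M) * |ε|^3 := by
    intro s hs
    have hsI : s ∈ Icc (0:ℝ) T := hIsub T hTmem hs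
    have hsI' : s ∈ I' := hsubI hsI
    have hxs : x s ∈ closedBall z δ := hmem' s hsI
    have hdec : v s (x s) - ε • F₁ (s, z) - ε^2 • (F₂ (s, z) + A s (w s)) =
        ε • (F₁ (s, x s) - F₁ (s, z) - A s (x s - z)) +
        ε • (A s (x s - z - ε • w s)) +
        ε^2 • (F₂ (s, x s) - F₂ (s, z)) + ε^3 • Ft (s, x s, ε) := by
      simp only [hvdef, map_sub, map_smul, smul_sub, smul_add]
      module
    rw [hdec]
    have e1 : ‖F₁ (s, x s) - F₁ (s, z) - A s (x s - z)‖ ≤ B * (|ε| * P) * (|ε| * P) := by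
      refine le_trans (taylor s hsI' (x s) hxs) ?_
      have h := step1 s hsI
      have h4 : B * ‖x s - z‖ ≤ B * (|ε| * P) := mul_le_mul_of_nonneg_left h hB0.le
      exact mul_le_mul h4 h (norm_nonneg _) (by positivity)
    have e2 : ‖A s (x s - z - ε • w s)‖ ≤ B * (|ε|^2 * Q) :=
      le_trans (hAnorm s hsI' _) (mul_le_mul_of_nonneg_left (step2 s hsI) hB0.le)
    have e3 : ‖F₂ (s, x s) - F₂ (s, z)‖ ≤ B * (|ε| * P) :=
      le_trans (lipF₂ s hsI' (x s) hxs z (mem_closedBall_self hδ.le))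
        (mul_le_mul_of_nonneg_left (step1 s hsI) hB0.le)
    have e4 : ‖Ft (s, x s, ε)‖ ≤ M := hMFt _ (hmemS' s hsI' (x s) hxs)
    have n1 : ‖ε • (F₁ (s, x s) - F₁ (s, z) - A s (x s - z))‖ ≤ B * P^2 * |ε|^3 := by
      rw [norm_smul, Real.norm_eq_abs]
      calc |ε| * ‖F₁ (s, x s) - F₁ (s, z) - A s (x s - z)‖
          ≤ |ε| * (B * (|ε| * P) * (|ε| * P)) := mul_le_mul_of_nonneg_left e1 hεabs0
      _ = B * P^2 * |ε|^3 := by ring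
    have n2 : ‖ε • (A s (x s - z - ε • w s))‖ ≤ B * Q * |ε|^3 := by
      rw [norm_smul, Real.norm_eq_abs]
      calc |ε| * ‖A s (x s - z - ε • w s)‖ ≤ |ε| * (B * (|ε|^2 * Q)) :=
            mul_le_mul_of_nonneg_left e2 hεabs0
      _ = B * Q * |ε|^3 := by ring
    have n3 : ‖ε^2 • (F₂ (s, x s) - F₂ (s, z))‖ ≤ B * P * |ε|^3 := by
      rw [norm_smul, Real.norm_eq_abs, abs_pow]
      calc |ε|^2 * ‖F₂ (s, x s) - F₂ (s, z)‖ ≤ |ε|^2 * (B * (|ε| * P)) :=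
            mul_le_mul_of_nonneg_left e3 (by positivity)
      _ = B * P * |ε|^3 := by ring
    have n4 : ‖ε^3 • Ft (s, x s, ε)‖ ≤ M * |ε|^3 := by
      rw [norm_smul, Real.norm_eq_abs, abs_pow]
      calc |ε|^3 * ‖Ft (s, x s, ε)‖ ≤ |ε|^3 * M :=
            mul_le_mul_of_nonneg_left e4 (by positivity)
      _ = M * |ε|^3 := by ring
    calc ‖ε • (F₁ (s, x s) - F₁ (s, z) - A s (x s - z)) +
          ε • (A s (x s - z - ε • w s)) +
          ε^2 • (F₂ (s, x s) - F₂ (s, z)) + ε^3 • Ft (s, x s, ε)‖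
        ≤ ‖ε • (F₁ (s, x s) - F₁ (s, z) - A s (x s - z)) +
          ε • (A s (x s - z - ε • w s)) +
          ε^2 • (F₂ (s, x s) - F₂ (s, z))‖ + ‖ε^3 • Ft (s, x s, ε)‖ := norm_add_le _ _
    _ ≤ ‖ε • (F₁ (s, x s) - F₁ (s, z) - A s (x s - z)) +
          ε • (A s (x s - z - ε • w s))‖ + ‖ε^2 • (F₂ (s, x s) - F₂ (s, z))‖ +
          ‖ε^3 • Ft (s, x s, ε)‖ := by
        have := norm_add_le (ε • (F₁ (s, x s) - F₁ (s, z) - A s (x s - z)) +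
          ε • (A s (x s - z - ε • w s))) (ε^2 • (F₂ (s, x s) - F₂ (s, z)))
        linarith
    _ ≤ ‖ε • (F₁ (s, x s) - F₁ (s, z) - A s (x s - z))‖ +
          ‖ε • (A s (x s - z - ε • w s))‖ + ‖ε^2 • (F₂ (s, x s) - F₂ (s, z))‖ +
          ‖ε^3 • Ft (s, x s, ε)‖ := by
        have := norm_add_le (ε • (F₁ (s, x s) - F₁ (s, z) - A s (x s - z)))
          (ε • (A s (x s - z - ε • w s)))
        linarith
    _ ≤ (B * P^2 + B * Q + B * P + M) * |ε|^3 := by linarith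
  refine le_trans (intervalIntegral.norm_integral_le_of_norm_le_const hpoint) ?_
  have hTabs : |T - 0| = T := by rw [sub_zero, abs_of_nonneg hT.le]
  rw [hTabs, hCcdef]
  apply le_of_eq
  ring
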